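/- For every real number ξ and all points x, y, z ∈ ℝ³, the determinant det(x, y, z) of the 3×3 matrix with rows x, y, z satisfies |det(x, y, z)| ≤ 2(‖x‖·L_ξ(y)·L_ξ(z) + ‖y‖·L_ξ(x)·L_ξ(z) + ‖z‖·L_ξ(x)·L_ξ(y)). -/

import Mathlib

/-- Norm of a point of ℝ³: max of absolute values of coordinates. -/
noncomputable def nrmR (x : ℝ × ℝ × ℝ) : ℝ := max |x.1| (max |x.2.1| |x.2.2|)

/-- L_ξ(x) = max(|x₁ − ξx₀|, |x₂ − ξ²x₀|). -/
noncomputable def LxiR (ξ : ℝ) (x : ℝ × ℝ × ℝ) : ℝ :=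
  max |x.2.1 - ξ * x.1| |x.2.2 - ξ ^ 2 * x.1|

/-- Determinant of the 3×3 matrix with rows x, y, z. -/
noncomputable def det3R (x y z : ℝ × ℝ × ℝ) : ℝ :=
  x.1 * (y.2.1 * z.2.2 - y.2.2 * z.2.1)
    - x.2.1 * (y.1 * z.2.2 - y.2.2 * z.1)
    + x.2.2 * (y.1 * z.2.1 - y.2.1 * z.1)

lemma minor_bound (b1 b2 c1 c2 B C : ℝ) (hb1 : |b1| ≤ B) (hb2 : |b2| ≤ B)
    (hc1 : |c1| ≤ C) (hc2 : |c2| ≤ C) : |b1 * c2 - b2 * c1| ≤ 2 * (B * C) := by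
  have h1 : |b1 * c2| ≤ B * C := by
    rw [abs_mul]; exact mul_le_mul hb1 hc2 (abs_nonneg _) ((abs_nonneg b1).trans hb1)
  have h2 : |b2 * c1| ≤ B * C := by
    rw [abs_mul]; exact mul_le_mul hb2 hc1 (abs_nonneg _) ((abs_nonneg b2).trans hb2)
  calc |b1 * c2 - b2 * c1| ≤ |b1 * c2| + |b2 * c1| := abs_sub _ _
    _ ≤ B * C + B * C := add_le_add h1 h2
    _ = 2 * (B * C) := by ring

/-- Bound for the 3×3 determinant. -/
theorem stmt19 (ξ : ℝ) (x y z : ℝ × ℝ × ℝ) :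
    |det3R x y z| ≤ 2 * (nrmR x * LxiR ξ y * LxiR ξ z + nrmR y * LxiR ξ x * LxiR ξ z
      + nrmR z * LxiR ξ x * LxiR ξ y) := by
  set a1 := x.2.1 - ξ * x.1 with ha1
  set a2 := x.2.2 - ξ ^ 2 * x.1 with ha2
  set b1 := y.2.1 - ξ * y.1 with hb1
  set b2 := y.2.2 - ξ ^ 2 * y.1 with hb2
  set c1 := z.2.1 - ξ * z.1 with hc1
  set c2 := z.2.2 - ξ ^ 2 * z.1 with hc2
  have key : det3R x y z =
      x.1 * (b1 * c2 - b2 * c1) - y.1 * (a1 * c2 - a2 * c1) + z.1 * (a1 * b2 - a2 * b1) := by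
    simp only [det3R, ha1, ha2, hb1, hb2, hc1, hc2]; ring
  have hxn : |x.1| ≤ nrmR x := le_max_left _ _
  have hyn : |y.1| ≤ nrmR y := le_max_left _ _
  have hzn : |z.1| ≤ nrmR z := le_max_left _ _
  have ha1L : |a1| ≤ LxiR ξ x := le_max_left _ _
  have ha2L : |a2| ≤ LxiR ξ x := le_max_right _ _
  have hb1L : |b1| ≤ LxiR ξ y := le_max_left _ _
  have hb2L : |b2| ≤ LxiR ξ y := le_max_right _ _
  have hc1L : |c1| ≤ LxiR ξ z := le_max_left _ _
  have hc2L : |c2| ≤ LxiR ξ z := le_max_right _ _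
  have h1 : |x.1 * (b1 * c2 - b2 * c1)| ≤ nrmR x * (2 * (LxiR ξ y * LxiR ξ z)) := by
    rw [abs_mul]
    exact mul_le_mul hxn (minor_bound _ _ _ _ _ _ hb1L hb2L hc1L hc2L) (abs_nonneg _)
      ((abs_nonneg x.1).trans hxn)
  have h2 : |y.1 * (a1 * c2 - a2 * c1)| ≤ nrmR y * (2 * (LxiR ξ x * LxiR ξ z)) := by
    rw [abs_mul]
    exact mul_le_mul hyn (minor_bound _ _ _ _ _ _ ha1L ha2L hc1L hc2L) (abs_nonneg _)
      ((abs_nonneg y.1).trans hyn)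
  have h3 : |z.1 * (a1 * b2 - a2 * b1)| ≤ nrmR z * (2 * (LxiR ξ x * LxiR ξ y)) := by
    rw [abs_mul]
    exact mul_le_mul hzn (minor_bound _ _ _ _ _ _ ha1L ha2L hb1L hb2L) (abs_nonneg _)
      ((abs_nonneg z.1).trans hzn)
  calc |det3R x y z|
      ≤ |x.1 * (b1 * c2 - b2 * c1)| + |y.1 * (a1 * c2 - a2 * c1)|
        + |z.1 * (a1 * b2 - a2 * b1)| := by
        rw [key]
        exact (abs_add_le _ _).trans (add_le_add_left (abs_sub _ _) _)
    _ ≤ nrmR x * (2 * (LxiR ξ y * LxiR ξ z)) + nrmR y * (2 * (LxiR ξ x * LxiR ξ z))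
        + nrmR z * (2 * (LxiR ξ x * LxiR ξ y)) := add_le_add (add_le_add h1 h2) h3
    _ = 2 * (nrmR x * LxiR ξ y * LxiR ξ z + nrmR y * LxiR ξ x * LxiR ξ z
        + nrmR z * LxiR ξ x * LxiR ξ y) := by ring
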